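/- With the Ĝ-orthonormalization iteration above and actions S = (s⁽¹⁾ … s⁽ᵏ⁾) having linearly independent columns, the matrix V = (z⁽¹⁾ … z⁽ᵏ⁾) satisfies V Vᵀ = S (Sᵀ Ĝ S)⁻¹ Sᵀ. That is, the incremental orthogonalized update computes the same projected inverse as batch conditioning on Sᵀ of the data. -/

import Mathlib

open Matrix

/-- Symmetry of the `G`-inner product for positive definite (hence hermitian) `G`. -/
lemma caKF_ip_symm {N : ℕ} {G : Matrix (Fin N) (Fin N) ℝ} (hG : G.PosDef)
    (x y : Fin N → ℝ) : x ⬝ᵥ (G *ᵥ y) = y ⬝ᵥ (G *ᵥ x) := by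
  have hGe : ∀ a b, G a b = G b a := by
    intro a b
    have := hG.1
    conv_lhs => rw [← this]
    simp [conjTranspose_apply]
  simp only [dotProduct, mulVec, dotProduct, Finset.mul_sum]
  rw [Finset.sum_comm]
  refine Finset.sum_congr rfl fun a _ => Finset.sum_congr rfl fun b _ => ?_
  rw [hGe b a]; ring

/-- Orthonormality and span properties of the `Ĝ`-orthogonalization iteration. -/
lemma caKF_ortho {N k : ℕ}
    (G : Matrix (Fin N) (Fin N) ℝ) (hG : G.PosDef)
    (s d z : Fin k → (Fin N → ℝ))
    (hs : LinearIndependent ℝ s)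
    (hd : ∀ i, d i = s i - ∑ j ∈ Finset.univ.filter (fun j => j < i),
      ((z j) ⬝ᵥ (G *ᵥ s i)) • z j)
    (hz : ∀ i, z i = (Real.sqrt ((s i) ⬝ᵥ (G *ᵥ d i)))⁻¹ • d i) :
    ∀ i : Fin k, z i ∈ Submodule.span ℝ (s '' {l | l ≤ i}) ∧
      (∀ j, j < i → z j ⬝ᵥ (G *ᵥ z i) = 0) ∧ z i ⬝ᵥ (G *ᵥ z i) = 1 := by
  classical
  have ip_sum : ∀ (x : Fin N → ℝ) (t : Finset (Fin k)) (f : Fin k → Fin N → ℝ),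
      x ⬝ᵥ (G *ᵥ (∑ j ∈ t, f j)) = ∑ j ∈ t, x ⬝ᵥ (G *ᵥ f j) := by
    intro x t f
    induction t using Finset.induction_on with
    | empty => simp
    | insert _ _ h ih => rw [Finset.sum_insert h, mulVec_add, dotProduct_add, ih,
        Finset.sum_insert h]
  have ip_smul : ∀ (x y : Fin N → ℝ) (c : ℝ),
      x ⬝ᵥ (G *ᵥ (c • y)) = c * (x ⬝ᵥ (G *ᵥ y)) := by
    intro x y c; rw [mulVec_smul, dotProduct_smul]; rfl
  have main : ∀ n : ℕ, ∀ i : Fin k, (i : ℕ) = n →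
      z i ∈ Submodule.span ℝ (s '' {l | l ≤ i}) ∧
      (∀ j, j < i → z j ⬝ᵥ (G *ᵥ z i) = 0) ∧ z i ⬝ᵥ (G *ᵥ z i) = 1 := by
    intro n
    induction n using Nat.strongRecOn with
    | ind n IH =>
      intro i hi
      subst hi
      have IH' : ∀ j : Fin k, j < i →
          z j ∈ Submodule.span ℝ (s '' {l | l ≤ j}) ∧
          (∀ l, l < j → z l ⬝ᵥ (G *ᵥ z j) = 0) ∧ z j ⬝ᵥ (G *ᵥ z j) = 1 :=
        fun j hj => IH j.1 hj j rfl
      have orth : ∀ j l : Fin k, j < i → l < i →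
          z j ⬝ᵥ (G *ᵥ z l) = if j = l then 1 else 0 := by
        intro j l hj hl
        rcases lt_trichotomy j l with h | h | h
        · rw [if_neg h.ne]; exact (IH' l hl).2.1 j h
        · subst h; rw [if_pos rfl]; exact (IH' j hj).2.2
        · rw [if_neg h.ne', caKF_ip_symm hG]; exact (IH' j hj).2.1 l h
      have step1 : ∀ j : Fin k, j < i → z j ⬝ᵥ (G *ᵥ d i) = 0 := by
        intro j hj
        rw [hd i, mulVec_sub, dotProduct_sub, ip_sum]
        have hsum : ∑ l ∈ Finset.univ.filter (fun l => l < i),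
            z j ⬝ᵥ (G *ᵥ ((z l ⬝ᵥ (G *ᵥ s i)) • z l)) = z j ⬝ᵥ (G *ᵥ s i) := by
          rw [Finset.sum_eq_single j]
          · rw [ip_smul, orth j j hj hj, if_pos rfl, mul_one]
          · intro l hl hne
            rw [ip_smul, orth j l hj (Finset.mem_filter.mp hl).2,
              if_neg (fun h => hne h.symm), mul_zero]
          · intro hmem
            simp only [Finset.mem_filter, Finset.mem_univ, true_and] at hmem
            exact absurd hj hmem
        rw [hsum, sub_self]
      have step2 : s i ⬝ᵥ (G *ᵥ d i) = d i ⬝ᵥ (G *ᵥ d i) := by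
        rw [caKF_ip_symm hG]
        have hsi : s i = d i + ∑ j ∈ Finset.univ.filter (fun j => j < i),
            ((z j) ⬝ᵥ (G *ᵥ s i)) • z j := by
          rw [hd i, sub_add_cancel]
        conv_lhs => rw [hsi]
        rw [mulVec_add, dotProduct_add, ip_sum]
        have hzero : ∑ j ∈ Finset.univ.filter (fun j => j < i),
            d i ⬝ᵥ (G *ᵥ ((z j ⬝ᵥ (G *ᵥ s i)) • z j)) = 0 := by
          apply Finset.sum_eq_zero
          intro j hj
          rw [ip_smul, caKF_ip_symm hG (d i), step1 j (Finset.mem_filter.mp hj).2,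
            mul_zero]
        rw [hzero, add_zero]
      have step3 : d i ≠ 0 := by
        intro h0
        have hsi : s i = ∑ j ∈ Finset.univ.filter (fun j => j < i),
            ((z j) ⬝ᵥ (G *ᵥ s i)) • z j := by
          have h := hd i
          rw [h0] at h
          exact sub_eq_zero.mp h.symm
        have hmem : s i ∈ Submodule.span ℝ (s '' {l | l < i}) := by
          rw [hsi]
          apply Submodule.sum_mem
          intro j hj
          apply Submodule.smul_mem
          refine Submodule.span_mono (Set.image_mono ?_) (IH' j (Finset.mem_filter.mp hj).2).1
          intro l hl
          exact lt_of_le_of_lt hl (Finset.mem_filter.mp hj).2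
        exact hs.notMem_span_image (by simp) hmem
      have step4 : 0 < d i ⬝ᵥ (G *ᵥ d i) := by
        have := hG.dotProduct_mulVec_pos step3
        simpa using this
      have step5 : 0 < s i ⬝ᵥ (G *ᵥ d i) := step2 ▸ step4
      have hrpos : 0 < Real.sqrt (s i ⬝ᵥ (G *ᵥ d i)) := Real.sqrt_pos.mpr step5
      have hr2 : Real.sqrt (s i ⬝ᵥ (G *ᵥ d i)) * Real.sqrt (s i ⬝ᵥ (G *ᵥ d i))
          = s i ⬝ᵥ (G *ᵥ d i) := Real.mul_self_sqrt step5.le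
      refine ⟨?_, ?_, ?_⟩
      · rw [hz i]
        apply Submodule.smul_mem
        rw [hd i]
        apply sub_mem
        · exact Submodule.subset_span (Set.mem_image_of_mem s (le_refl i))
        · apply Submodule.sum_mem
          intro j hj
          apply Submodule.smul_mem
          refine Submodule.span_mono (Set.image_mono ?_) (IH' j (Finset.mem_filter.mp hj).2).1
          intro l hl
          exact le_trans hl (le_of_lt (Finset.mem_filter.mp hj).2)
      · intro j hj
        rw [hz i, ip_smul, step1 j hj, mul_zero]
      · rw [hz i, ip_smul, smul_dotProduct, smul_eq_mul, ← step2, ← hr2]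
        field_simp
        rw [Real.sq_sqrt (sq_nonneg _)]
  exact fun i => main i.1 i rfl

/-- The iterative `Ĝ`-orthogonalized update computes the same projected inverse
as batch conditioning: `V Vᵀ = S (Sᵀ Ĝ S)⁻¹ Sᵀ` where the columns of `V` are the
orthogonalized vectors `z⁽ⁱ⁾` and the columns of `S` are the actions `s⁽ⁱ⁾`. -/
theorem gram_schmidt_batch_equiv {N k : ℕ}
    (G : Matrix (Fin N) (Fin N) ℝ) (hG : G.PosDef)
    (s d z : Fin k → (Fin N → ℝ))
    (hs : LinearIndependent ℝ s)
    (hd : ∀ i, d i = s i - ∑ j ∈ Finset.univ.filter (fun j => j < i),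
      ((z j) ⬝ᵥ (G *ᵥ s i)) • z j)
    (hz : ∀ i, z i = (Real.sqrt ((s i) ⬝ᵥ (G *ᵥ d i)))⁻¹ • d i) :
    (∑ i, Matrix.vecMulVec (z i) (z i)) =
      (Matrix.of fun a i => s i a) *
        ((Matrix.of fun a i => s i a)ᵀ * G * (Matrix.of fun a i => s i a))⁻¹ *
        (Matrix.of fun a i => s i a)ᵀ := by
  classical
  have key := caKF_ortho G hG s d z hs hd hz
  set A : Matrix (Fin N) (Fin k) ℝ := Matrix.of fun a i => s i a with hA
  -- coefficients of z in terms of s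
  have hcoef : ∀ i : Fin k, ∃ c : Fin k → ℝ, ∑ j, c j • s j = z i := by
    intro i
    have : z i ∈ Submodule.span ℝ (Set.range s) := by
      refine Submodule.span_mono ?_ (key i).1
      rintro _ ⟨l, _, rfl⟩
      exact ⟨l, rfl⟩
    exact Submodule.mem_span_range_iff_exists_fun ℝ |>.mp this
  choose c hc using hcoef
  set Cm : Matrix (Fin k) (Fin k) ℝ := Matrix.of fun j i => c i j with hCm
  have hZ : A * Cm = Matrix.of fun a i => z i a := by
    ext a i
    have := congrFun (hc i) a
    simp only [Finset.sum_apply, Pi.smul_apply, smul_eq_mul] at this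
    simp only [mul_apply, hA, hCm, of_apply]
    rw [← this]
    exact Finset.sum_congr rfl fun j _ => mul_comm _ _
  -- orthonormality in matrix form
  have horth : (A * Cm)ᵀ * G * (A * Cm) = 1 := by
    ext i j
    have expand : ((A * Cm)ᵀ * G * (A * Cm)) i j = z i ⬝ᵥ (G *ᵥ z j) := by
      rw [hZ]
      simp only [mul_apply, transpose_apply, of_apply, dotProduct, mulVec,
        dotProduct, Finset.sum_mul, Finset.mul_sum]
      rw [Finset.sum_comm]
      refine Finset.sum_congr rfl fun a _ => Finset.sum_congr rfl fun b _ => ?_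
      ring
    rw [expand]
    rcases lt_trichotomy i j with h | h | h
    · rw [(key j).2.1 i h]
      simp [Matrix.one_apply, h.ne]
    · subst h
      rw [(key i).2.2]
      simp
    · rw [caKF_ip_symm hG, (key i).2.1 j h]
      simp [Matrix.one_apply, h.ne']
  -- M = Aᵀ G A is positive definite
  set M : Matrix (Fin k) (Fin k) ℝ := Aᵀ * G * A with hM
  have hAc : Aᴴ = Aᵀ := conjTranspose_eq_transpose_of_trivial A
  have hAinj : ∀ x : Fin k → ℝ, A *ᵥ x = 0 → x = 0 := by
    intro x hx
    have hxs : ∑ j, x j • s j = 0 := by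
      ext a
      have := congrFun hx a
      simp only [mulVec, dotProduct, hA, of_apply, Pi.zero_apply] at this
      simp only [Finset.sum_apply, Pi.smul_apply, smul_eq_mul, Pi.zero_apply]
      rw [← this]
      exact Finset.sum_congr rfl fun j _ => mul_comm _ _
    funext j
    exact Fintype.linearIndependent_iff.mp hs x hxs j
  have hMps : M.PosSemidef := by
    rw [hM, ← hAc]
    exact hG.posSemidef.conjTranspose_mul_mul_same A
  have hMpd : M.PosDef := by
    refine PosDef.of_dotProduct_mulVec_pos hMps.1 fun x hx => ?_
    have hAx : A *ᵥ x ≠ 0 := fun h => hx (hAinj x h)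
    have h2 := hG.dotProduct_mulVec_pos hAx
    rw [hM, ← hAc]
    simpa only [star_mulVec, dotProduct_mulVec, vecMul_vecMul] using h2
  have hMdet : IsUnit M.det := isUnit_iff_ne_zero.mpr (ne_of_gt hMpd.det_pos)
  have horth' : Cmᵀ * M * Cm = 1 := by
    rw [hM]
    simpa only [transpose_mul, Matrix.mul_assoc] using horth
  have hCdet : IsUnit Cm.det := by
    have h1 : Cmᵀ.det * M.det * Cm.det = 1 := by
      have := congrArg Matrix.det horth'
      simpa [Matrix.det_mul] using this
    rw [Matrix.det_transpose] at h1
    refine IsUnit.of_mul_eq_one (M.det * Cm.det) ?_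
    rw [← mul_assoc]
    exact h1
  have hCt : IsUnit Cmᵀ.det := by rwa [Matrix.det_transpose]
  have hMC : M * (Cm * Cmᵀ) = 1 := by
    have h2 : Cmᵀ * (M * (Cm * Cmᵀ)) = Cmᵀ := by
      calc Cmᵀ * (M * (Cm * Cmᵀ)) = (Cmᵀ * M * Cm) * Cmᵀ := by
            simp only [Matrix.mul_assoc]
        _ = Cmᵀ := by rw [horth', one_mul]
    calc M * (Cm * Cmᵀ) = Cmᵀ⁻¹ * (Cmᵀ * (M * (Cm * Cmᵀ))) := by
          rw [← Matrix.mul_assoc Cmᵀ⁻¹ Cmᵀ _, Matrix.nonsing_inv_mul _ hCt, one_mul]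
      _ = Cmᵀ⁻¹ * Cmᵀ := by rw [h2]
      _ = 1 := Matrix.nonsing_inv_mul _ hCt
  have hMinv : M⁻¹ = Cm * Cmᵀ := Matrix.inv_eq_right_inv hMC
  have hLHS : (∑ i, Matrix.vecMulVec (z i) (z i)) = (A * Cm) * (A * Cm)ᵀ := by
    ext a b
    rw [hZ]
    simp only [Matrix.sum_apply, vecMulVec_apply, mul_apply, transpose_apply, of_apply]
  rw [hLHS, hMinv, transpose_mul]
  simp only [Matrix.mul_assoc]
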